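/- arXiv:2003.07283 — 5 statements merged into one kernel-verified Lean document; each statement's English description precedes it below -/
import Mathlib

section
/- Let G be a finite directed acyclic graph containing arcs (u,v), (v,w), (w,z) for distinct vertices u,v,w,z. Let G' be obtained by replacing these three arcs with (u,w), (w,v), (v,z). If G' contains a directed cycle, then any shortest directed cycle in G' uses the arc (w,v). -/
/-- A directed graph on vertex set `V` is given by a finite set of arcs `A ⊆ V × V`;
`Adj A u v` means there is an arc from `u` to `v`. -/
def Adj {V : Type} (A : Finset (V × V)) (u v : V) : Prop := (u, v) ∈ A

/-- In-degree of a vertex. -/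
def inDeg {V : Type} [DecidableEq V] (A : Finset (V × V)) (v : V) : ℕ :=
  (A.filter (fun e => e.2 = v)).card

/-- Out-degree of a vertex. -/
def outDeg {V : Type} [DecidableEq V] (A : Finset (V × V)) (v : V) : ℕ :=
  (A.filter (fun e => e.1 = v)).card

/-- A leaf is a vertex of in-degree 1 and out-degree 0. -/
def IsLeaf {V : Type} [DecidableEq V] (A : Finset (V × V)) (v : V) : Prop :=
  inDeg A v = 1 ∧ outDeg A v = 0

/-- A directed graph is acyclic if it has no directed cycle,
i.e. no vertex has a nontrivial directed path to itself. -/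
def Acyclic {V : Type} (A : Finset (V × V)) : Prop :=
  ∀ v : V, ¬ Relation.TransGen (Adj A) v v

/-- A binary rooted phylogenetic network: a finite directed acyclic simple graph whose
vertices are the root (in-degree 0, out-degree 1 or 2), leaves (in-degree 1, out-degree 0),
tree vertices (in-degree 1, out-degree 2) and reticulation vertices
(in-degree 2, out-degree 1). -/
structure IsPhyloNetwork {V : Type} [Fintype V] [DecidableEq V]
    (A : Finset (V × V)) (root : V) : Prop where
  acyclic : Acyclic A
  root_in : inDeg A root = 0
  root_out : outDeg A root = 1 ∨ outDeg A root = 2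
  vertex_types : ∀ v : V, v ≠ root →
    (inDeg A v = 1 ∧ outDeg A v = 0) ∨
    (inDeg A v = 1 ∧ outDeg A v = 2) ∨
    (inDeg A v = 2 ∧ outDeg A v = 1)

/-- The arc replacement of an rNNI move: arcs `(u,v),(v,w),(w,z)` are replaced by
`(u,w),(w,v),(v,z)`. -/
def rnniSwap {V : Type} [DecidableEq V] (A : Finset (V × V)) (u v w z : V) :
    Finset (V × V) :=
  (A \ {(u, v), (v, w), (w, z)}) ∪ {(u, w), (w, v), (v, z)}

/-- A directed cycle: a nonempty list of distinct vertices such that consecutive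
vertices (cyclically) are joined by arcs. `List.Chain (Adj A) (c.getLast h) c`
says the closed walk last → first → second → ⋯ → last consists of arcs. -/
def IsDCycle {V : Type} (A : Finset (V × V)) (c : List V) : Prop :=
  ∃ h : c ≠ [], c.Nodup ∧ List.Chain (Adj A) (c.getLast h) c

/-- The arcs traversed by the closed walk determined by the cycle list `c`. -/
def cycleArcs {V : Type} (c : List V) (h : c ≠ []) : List (V × V) :=
  (c.getLast h :: c).zip c

private lemma chain_strengthen {V : Type} {R S : V → V → Prop} :
    ∀ (l : List V) (x : V), List.Chain R x l →
      (∀ a b, (a, b) ∈ (x :: l).zip l → R a b → S a b) →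
      List.Chain S x l
  | [], _, _, _ => List.Chain.nil
  | y :: t, x, h, hs => by
      rcases List.chain_cons.mp h with ⟨hxy, ht⟩
      refine List.chain_cons.mpr ⟨hs x y ?_ hxy, chain_strengthen t y ht ?_⟩
      · simp [List.zip]
      · intro a b hab; exact hs a b (List.mem_cons_of_mem _ (by simpa [List.zip] using hab))

private lemma chain_transGen {V : Type} {R : V → V → Prop} :
    ∀ (l : List V) (x : V) (h : l ≠ []),
      List.Chain (Relation.TransGen R) x l →
      Relation.TransGen R x (l.getLast h)
  | [y], x, _, h => by
      rcases List.chain_cons.mp h with ⟨hxy, _⟩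
      simpa using hxy
  | y :: a :: t, x, _, h => by
      rcases List.chain_cons.mp h with ⟨hxy, ht⟩
      exact hxy.trans (chain_transGen (a :: t) y (by simp) ht)

/-- If the graph obtained from a DAG by an rNNI arc replacement contains a directed
cycle, then any shortest directed cycle in it traverses the arc `(w, v)`. -/
theorem stmt1 {V : Type} [Fintype V] [DecidableEq V]
    (A : Finset (V × V)) (hAc : Acyclic A) (u v w z : V)
    (hdist : ([u, v, w, z] : List V).Nodup)
    (huv : (u, v) ∈ A) (hvw : (v, w) ∈ A) (hwz : (w, z) ∈ A)
    (c : List V) (hc : c ≠ []) (hnd : c.Nodup)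
    (hchain : List.Chain (Adj (rnniSwap A u v w z)) (c.getLast hc) c)
    (hmin : ∀ c' : List V, IsDCycle (rnniSwap A u v w z) c' → c.length ≤ c'.length) :
    (w, v) ∈ cycleArcs c hc := by
  by_contra hnot
  have key : ∀ a b : V, Adj (rnniSwap A u v w z) a b → (a, b) ≠ (w, v) →
      Relation.TransGen (Adj A) a b := by
    intro a b hab hne
    rcases Finset.mem_union.mp hab with h | h
    · exact Relation.TransGen.single (Finset.mem_sdiff.mp h).1
    · simp only [Finset.mem_insert, Finset.mem_singleton, Prod.mk.injEq] at h
      rcases h with ⟨rfl, rfl⟩ | ⟨rfl, rfl⟩ | ⟨rfl, rfl⟩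
      · exact Relation.TransGen.head huv (Relation.TransGen.single hvw)
      · exact absurd rfl hne
      · exact Relation.TransGen.head hvw (Relation.TransGen.single hwz)
  have hchain' : List.Chain (Relation.TransGen (Adj A)) (c.getLast hc) c := by
    refine chain_strengthen c (c.getLast hc) hchain ?_
    intro a b hab hR
    refine key a b hR ?_
    rintro ⟨rfl, rfl⟩
    exact hnot hab
  exact hAc (c.getLast hc) (chain_transGen c (c.getLast hc) hc hchain')
end

section
/- Let G be a finite directed acyclic graph with arcs (u,v), (v,w), (w,z) for distinct vertices u,v,w,z, and suppose every directed cycle of the graph G' obtained by replacing these arcs with (u,w), (w,v), (v,z) must use at least two of the arcs incident to v or w other than the path arcs. If G' contains no arc pair realizing a directed path from a successor of v back to a predecessor of w outside the path, and in G there is no directed path from any out-neighbor of v (other than w) to any in-neighbor of w (other than v), then G' is acyclic. -/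
/-- If every directed cycle of the graph `G'` obtained by the rNNI arc replacement uses
at least two arcs incident to `v` or `w` other than the path arcs `(u,w),(w,v),(v,z)`,
`G'` has no pair of non-path arcs `(v,x)`, `(y,w)` with a directed path from `x` to `y`,
and in `G` there is no directed path from an out-neighbour of `v` other than `w` to an
in-neighbour of `w` other than `v`, then `G'` is acyclic. -/
theorem stmt2 {V : Type} [Fintype V] [DecidableEq V]
    (A : Finset (V × V)) (hAc : Acyclic A) (u v w z : V)
    (hdist : ([u, v, w, z] : List V).Nodup)
    (huv : (u, v) ∈ A) (hvw : (v, w) ∈ A) (hwz : (w, z) ∈ A)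
    (H1 : ∀ (c : List V) (h : c ≠ []), c.Nodup →
      List.Chain (Adj (rnniSwap A u v w z)) (c.getLast h) c →
      ∃ e₁ e₂ : V × V, e₁ ≠ e₂ ∧
        (e₁.1 = v ∨ e₁.2 = v ∨ e₁.1 = w ∨ e₁.2 = w) ∧
        e₁ ∉ ({(u, w), (w, v), (v, z)} : Finset (V × V)) ∧
        (e₂.1 = v ∨ e₂.2 = v ∨ e₂.1 = w ∨ e₂.2 = w) ∧
        e₂ ∉ ({(u, w), (w, v), (v, z)} : Finset (V × V)) ∧
        e₁ ∈ cycleArcs c h ∧ e₂ ∈ cycleArcs c h)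
    (H2 : ¬ ∃ x y : V, (v, x) ∈ rnniSwap A u v w z ∧ (y, w) ∈ rnniSwap A u v w z ∧
      (v, x) ∉ ({(u, w), (w, v), (v, z)} : Finset (V × V)) ∧
      (y, w) ∉ ({(u, w), (w, v), (v, z)} : Finset (V × V)) ∧
      Relation.ReflTransGen (Adj (rnniSwap A u v w z)) x y)
    (H3 : ∀ x y : V, (v, x) ∈ A → x ≠ w → (y, w) ∈ A → y ≠ v →
      ¬ Relation.ReflTransGen (Adj A) x y) :
    Acyclic (rnniSwap A u v w z) := by
  classical
  simp only [List.nodup_cons, List.mem_cons, List.mem_singleton, List.not_mem_nil,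
    or_false, List.nodup_nil, and_true, not_or] at hdist
  obtain ⟨⟨huv0, huw0, huz0⟩, ⟨hvw0, hvz0⟩, hwz0⟩ := hdist
  have hwz0 : ¬ w = z := by tauto
  set N : Finset (V × V) := {(u, w), (w, v), (v, z)} with hNdef
  set rB : V → V → Prop := fun a b => Adj (rnniSwap A u v w z) a b ∧ (a, b) ∉ N with hrB
  have hBA : ∀ {a b : V}, rB a b → (a, b) ∈ A := by
    rintro a b ⟨h1, h2⟩
    rcases Finset.mem_union.mp h1 with h | h
    · exact (Finset.mem_sdiff.mp h).1
    · exact absurd h h2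
  have hSR : ∀ {a b : V}, Relation.ReflTransGen rB a b →
      Relation.ReflTransGen (Adj A) a b := by
    intro a b h
    exact Relation.ReflTransGen.mono (fun p q hpq => hBA hpq) a b h
  -- forbidden pure-A reachabilities
  have Fzu : Relation.ReflTransGen rB z u → False := fun h =>
    hAc w (Relation.TransGen.head' hwz (((hSR h).tail huv).tail hvw))
  have Fzw : Relation.ReflTransGen rB z w → False := fun h =>
    hAc w (Relation.TransGen.head' hwz (hSR h))
  have Fzv : Relation.ReflTransGen rB z v → False := fun h =>
    hAc w (Relation.TransGen.head' hwz ((hSR h).tail hvw))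
  have Fwu : Relation.ReflTransGen rB w u → False := fun h =>
    hAc w (Relation.TransGen.tail' ((hSR h).tail huv) hvw)
  have Fwv : Relation.ReflTransGen rB w v → False := fun h =>
    hAc w (Relation.TransGen.tail' (hSR h) hvw)
  have Fvu : Relation.ReflTransGen rB v u → False := fun h =>
    hAc v (Relation.TransGen.tail' (hSR h) huv)
  have hvwA' : (v, w) ∉ rnniSwap A u v w z := by
    intro h
    rcases Finset.mem_union.mp h with h | h
    · exact (Finset.mem_sdiff.mp h).2 (by simp)
    · simp only [hNdef, Finset.mem_insert, Finset.mem_singleton, Prod.mk.injEq] at h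
      rcases h with ⟨h1, _⟩ | ⟨h1, _⟩ | ⟨_, h1⟩
      · exact huv0 h1.symm
      · exact hvw0 h1
      · exact hwz0 h1
  have Fvw : Relation.ReflTransGen rB v w → False := by
    intro h
    rcases Relation.ReflTransGen.cases_head h with heq | ⟨x, hvx, hxw⟩
    · exact hvw0 heq
    · rcases Relation.ReflTransGen.cases_tail hxw with heq | ⟨s, hxs, hsw⟩
      · rw [← heq] at hvx
        exact hvwA' hvx.1
      · exact H2 ⟨x, s, hvx.1, hsw.1, hvx.2, hsw.2,
          Relation.ReflTransGen.mono (fun p q (hpq : rB p q) => hpq.1) x s hxs⟩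
  -- classification of single steps
  have step : ∀ a b : V, Adj (rnniSwap A u v w z) a b →
      rB a b ∨ (a = u ∧ b = w) ∨ (a = w ∧ b = v) ∨ (a = v ∧ b = z) := by
    intro a b h
    by_cases hN : (a, b) ∈ N
    · right
      simpa only [hNdef, Finset.mem_insert, Finset.mem_singleton, Prod.mk.injEq] using hN
    · exact Or.inl ⟨h, hN⟩
  -- structure of paths in the swapped graph
  have key : ∀ x y : V, Relation.TransGen (Adj (rnniSwap A u v w z)) x y →
      Relation.TransGen rB x y ∨
      (Relation.ReflTransGen rB x u ∧
        (Relation.ReflTransGen rB w y ∨ Relation.ReflTransGen rB v y ∨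
          Relation.ReflTransGen rB z y)) ∨
      (Relation.ReflTransGen rB x w ∧
        (Relation.ReflTransGen rB v y ∨ Relation.ReflTransGen rB z y)) ∨
      (Relation.ReflTransGen rB x v ∧ Relation.ReflTransGen rB z y) := by
    intro x y h
    induction h with
    | single h =>
      rcases step _ _ h with hB | ⟨rfl, rfl⟩ | ⟨rfl, rfl⟩ | ⟨rfl, rfl⟩
      · exact Or.inl (Relation.TransGen.single hB)
      · exact Or.inr (Or.inl ⟨Relation.ReflTransGen.refl, Or.inl Relation.ReflTransGen.refl⟩)
      · exact Or.inr (Or.inr (Or.inl ⟨Relation.ReflTransGen.refl,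
          Or.inl Relation.ReflTransGen.refl⟩))
      · exact Or.inr (Or.inr (Or.inr ⟨Relation.ReflTransGen.refl,
          Relation.ReflTransGen.refl⟩))
    | tail h1 h2 ih =>
      rcases step _ _ h2 with hB | ⟨rfl, rfl⟩ | ⟨rfl, rfl⟩ | ⟨rfl, rfl⟩
      · rcases ih with hx | ⟨ha, hb | hb | hb⟩ | ⟨ha, hb | hb⟩ | ⟨ha, hb⟩
        · exact Or.inl (hx.tail hB)
        · exact Or.inr (Or.inl ⟨ha, Or.inl (hb.tail hB)⟩)
        · exact Or.inr (Or.inl ⟨ha, Or.inr (Or.inl (hb.tail hB))⟩)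
        · exact Or.inr (Or.inl ⟨ha, Or.inr (Or.inr (hb.tail hB))⟩)
        · exact Or.inr (Or.inr (Or.inl ⟨ha, Or.inl (hb.tail hB)⟩))
        · exact Or.inr (Or.inr (Or.inl ⟨ha, Or.inr (hb.tail hB)⟩))
        · exact Or.inr (Or.inr (Or.inr ⟨ha, hb.tail hB⟩))
      · -- new arc (u, w)
        rcases ih with hx | ⟨ha, hb | hb | hb⟩ | ⟨ha, hb | hb⟩ | ⟨ha, hb⟩
        · exact Or.inr (Or.inl ⟨hx.to_reflTransGen, Or.inl Relation.ReflTransGen.refl⟩)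
        · exact absurd hb Fwu
        · exact absurd hb Fvu
        · exact absurd hb Fzu
        · exact absurd hb Fvu
        · exact absurd hb Fzu
        · exact absurd hb Fzu
      · -- new arc (w, v)
        rcases ih with hx | ⟨ha, hb | hb | hb⟩ | ⟨ha, hb | hb⟩ | ⟨ha, hb⟩
        · exact Or.inr (Or.inr (Or.inl ⟨hx.to_reflTransGen,
            Or.inl Relation.ReflTransGen.refl⟩))
        · exact Or.inr (Or.inl ⟨ha, Or.inr (Or.inl Relation.ReflTransGen.refl)⟩)
        · exact absurd hb Fvw
        · exact absurd hb Fzw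
        · exact absurd hb Fvw
        · exact absurd hb Fzw
        · exact absurd hb Fzw
      · -- new arc (v, z)
        rcases ih with hx | ⟨ha, hb | hb | hb⟩ | ⟨ha, hb | hb⟩ | ⟨ha, hb⟩
        · exact Or.inr (Or.inr (Or.inr ⟨hx.to_reflTransGen, Relation.ReflTransGen.refl⟩))
        · exact absurd hb Fwv
        · exact Or.inr (Or.inl ⟨ha, Or.inr (Or.inr Relation.ReflTransGen.refl)⟩)
        · exact absurd hb Fzv
        · exact Or.inr (Or.inr (Or.inl ⟨ha, Or.inr Relation.ReflTransGen.refl⟩))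
        · exact absurd hb Fzv
        · exact absurd hb Fzv
  intro a h
  rcases key a a h with hx | ⟨ha, hb | hb | hb⟩ | ⟨ha, hb | hb⟩ | ⟨ha, hb⟩
  · exact hAc a (Relation.TransGen.mono (fun p q hpq => hBA hpq) a a hx)
  · exact Fwu (hb.trans ha)
  · exact Fvu (hb.trans ha)
  · exact Fzu (hb.trans ha)
  · exact Fvw (hb.trans ha)
  · exact Fzw (hb.trans ha)
  · exact Fzv (hb.trans ha)
end

section
/- Let N be a directed acyclic graph with arcs (z,u), (z,v), (v,w) for distinct vertices u,v,w,z. If N contains no directed path from u to v and no arc (v,u), then the graph N' obtained by replacing arcs (z,u), (z,v), (v,w) with (v,u), (z,v), (z,w) is acyclic. -/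
/-- The arc replacement of the root rNNI move: arcs `(z,u),(z,v),(v,w)` are replaced by
`(v,u),(z,v),(z,w)`. -/
def rootSwap {V : Type} [DecidableEq V] (A : Finset (V × V)) (u v w z : V) :
    Finset (V × V) :=
  (A \ {(z, u), (z, v), (v, w)}) ∪ {(v, u), (z, v), (z, w)}

/-- If a DAG with arcs `(z,u),(z,v),(v,w)` has no directed path from `u` to `v` and
no arc `(v,u)`, then replacing these arcs by `(v,u),(z,v),(z,w)` keeps the graph
acyclic. -/
theorem stmt3 {V : Type} [Fintype V] [DecidableEq V]
    (A : Finset (V × V)) (hAc : Acyclic A) (u v w z : V)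
    (hdist : ([u, v, w, z] : List V).Nodup)
    (hzu : (z, u) ∈ A) (hzv : (z, v) ∈ A) (hvw : (v, w) ∈ A)
    (hpath : ¬ Relation.ReflTransGen (Adj A) u v)
    (hvu : (v, u) ∉ A) :
    Acyclic (rootSwap A u v w z) := by
  classical
  set B : Finset (V × V) := insert (v, u) A with hB
  have hstep : ∀ a b : V, Adj B a b → (a, b) ∈ A ∨ (a = v ∧ b = u) := by
    intro a b hab
    rcases Finset.mem_insert.1 hab with h | h
    · right; exact ⟨congrArg Prod.fst h, congrArg Prod.snd h⟩
    · left; exact h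
  have key : ∀ a b : V, Relation.TransGen (Adj B) a b →
      Relation.TransGen (Adj A) a b ∨
      (Relation.ReflTransGen (Adj A) a v ∧ Relation.ReflTransGen (Adj A) u b) := by
    intro a b h
    induction h with
    | single h =>
      rcases hstep _ _ h with h | ⟨rfl, rfl⟩
      · exact Or.inl (Relation.TransGen.single h)
      · exact Or.inr ⟨Relation.ReflTransGen.refl, Relation.ReflTransGen.refl⟩
    | tail h1 h2 ih =>
      rcases hstep _ _ h2 with hA | ⟨rfl, rfl⟩
      · rcases ih with h | ⟨ha, hb⟩
        · exact Or.inl (h.tail hA)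
        · exact Or.inr ⟨ha, hb.tail hA⟩
      · rcases ih with h | ⟨ha, hb⟩
        · exact Or.inr ⟨h.to_reflTransGen, Relation.ReflTransGen.refl⟩
        · exact absurd hb hpath
  have hBac : Acyclic B := by
    intro x hx
    rcases key _ _ hx with h | ⟨h1, h2⟩
    · exact hAc x h
    · exact hpath (h2.trans h1)
  intro x hx
  have mono : ∀ a b : V, Adj (rootSwap A u v w z) a b → Relation.TransGen (Adj B) a b := by
    intro a b hab
    unfold rootSwap at hab
    rcases Finset.mem_union.1 hab with h | h
    · exact Relation.TransGen.single (Finset.mem_insert_of_mem (Finset.mem_sdiff.1 h).1)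
    · simp only [Finset.mem_insert, Finset.mem_singleton, Prod.mk.injEq] at h
      rcases h with ⟨rfl, rfl⟩ | ⟨rfl, rfl⟩ | ⟨rfl, rfl⟩
      · exact Relation.TransGen.single (Finset.mem_insert_self _ _)
      · exact Relation.TransGen.single (Finset.mem_insert_of_mem hzv)
      · exact Relation.TransGen.head (Finset.mem_insert_of_mem hzv)
          (Relation.TransGen.single (Finset.mem_insert_of_mem hvw))
  have h2 := Relation.TransGen.mono mono x x hx
  rw [Relation.transGen_idem] at h2
  exact hBac x h2
end

section
/- Let N be a rooted tree-based phylogenetic network with support tree T, and suppose T contains a directed path u → v → w → z of length 3. Let N' be the network obtained by the rNNI move replacing arcs (u,v),(v,w),(w,z) with (u,w),(w,v),(v,z) (assuming this yields a valid acyclic phylogenetic network). Then T' = T − {(u,v),(v,w),(w,z)} + {(u,w),(w,v),(v,z)} is a support tree of N', so N' is tree-based. -/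
/-- The undirected simple graph underlying a set of arcs. -/
def toSimpleGraph {V : Type} (T : Finset (V × V)) : SimpleGraph V where
  Adj a b := a ≠ b ∧ ((a, b) ∈ T ∨ (b, a) ∈ T)
  symm := ⟨fun _ _ h => ⟨h.1.symm, h.2.symm⟩⟩
  loopless := ⟨fun _ h => h.1 rfl⟩

/-- `T` is a support tree of the network with arc set `A`: a spanning tree of `A`
(on the whole vertex set) whose leaves are exactly the leaves of `A`. -/
def IsSupportTree {V : Type} [Fintype V] [DecidableEq V]
    (A T : Finset (V × V)) : Prop :=
  T ⊆ A ∧ (toSimpleGraph T).IsTree ∧ ∀ v : V, (IsLeaf A v ↔ IsLeaf T v)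

section TreeAux

open SimpleGraph hiding Adj

lemma tree_no_triangle {V : Type} {G : SimpleGraph V} (hG : G.IsTree) {a b c : V}
    (hab : G.Adj a b) (hbc : G.Adj b c) (hac : G.Adj a c) : False := by
  have h1 : (Walk.cons hac Walk.nil).IsPath := by
    simp [Walk.isPath_def, hac.ne]
  have h2 : (Walk.cons hab (Walk.cons hbc Walk.nil)).IsPath := by
    simp [Walk.isPath_def, hab.ne, hbc.ne, hac.ne]
  have := (hG.existsUnique_path a c).unique h1 h2
  simpa using congrArg Walk.length this

lemma tree_swap {V : Type} {G : SimpleGraph V} (hG : G.IsTree) {a b c d : V}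
    (hab : G.Adj a b) (hcd : c ≠ d)
    (hac : (G \ fromEdgeSet {s(a,b)}).Reachable a c)
    (hbd : (G \ fromEdgeSet {s(a,b)}).Reachable b d) :
    ((G \ fromEdgeSet {s(a,b)}) ⊔ fromEdgeSet {s(c,d)}).IsTree := by
  set G0 := G \ fromEdgeSet {s(a,b)} with hG0
  set H := G0 ⊔ fromEdgeSet {s(c,d)} with hH
  have hG0le : G0 ≤ G := sdiff_le
  have hHcd : H.Adj c d := by
    rw [hH, sup_adj, fromEdgeSet_adj]
    exact Or.inr ⟨rfl, hcd⟩
  have hbr : ¬ G0.Reachable a b := by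
    have := (isAcyclic_iff_forall_adj_isBridge.mp hG.IsAcyclic) hab
    rw [isBridge_iff] at this
    exact this
  have hstep : ∀ p q : V, G.Adj p q → H.Reachable p q := by
    intro p q hpq
    by_cases he : s(p,q) = s(a,b)
    · have hreach : H.Reachable a b :=
        ((hac.mono le_sup_left).trans hHcd.reachable).trans (hbd.mono le_sup_left).symm
      rcases Sym2.eq_iff.mp he with ⟨rfl, rfl⟩ | ⟨rfl, rfl⟩
      · exact hreach
      · exact hreach.symm
    · refine Reachable.mono le_sup_left (SimpleGraph.Adj.reachable ?_)
      rw [hG0, sdiff_adj, fromEdgeSet_adj]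
      exact ⟨hpq, fun hf => he hf.1⟩
  have hconn : H.Connected := by
    have hne : Nonempty V := hG.isConnected.nonempty
    refine Connected.mk ?_
    intro x y
    have hxy := hG.isConnected.preconnected x y
    rw [reachable_iff_reflTransGen] at hxy
    induction hxy with
    | refl => exact Reachable.refl _
    | tail _ hadj ih => exact ih.trans (hstep _ _ hadj)
  have hacyc : H.IsAcyclic := by
    intro x C hC
    by_cases hmem : s(c,d) ∈ C.edges
    · have hnb : ¬ H.IsBridge s(c,d) := fun hb =>
        (isBridge_iff_forall_cycle_notMem hHcd).mp hb C hC hmem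
      have hre : (H \ fromEdgeSet {s(c,d)}).Reachable c d := by
        by_contra hre
        exact hnb (isBridge_iff.mpr hre)
      have hle : H \ fromEdgeSet {s(c,d)} ≤ G0 := by
        intro x y hxy
        rw [sdiff_adj, hH, sup_adj] at hxy
        rcases hxy with ⟨h1 | h1, h2⟩
        · exact h1
        · exact absurd h1 h2
      exact hbr ((hac.trans ((hre.mono hle).trans hbd.symm)))
    · have hCe : ∀ e ∈ C.edges, e ∈ G.edgeSet := by
        intro e he
        have hmm := C.edges_subset_edgeSet he
        rw [hH, edgeSet_sup] at hmm
        rcases hmm with h1 | h1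
        · exact (edgeSet_mono hG0le) h1
        · rw [edgeSet_fromEdgeSet] at h1
          obtain ⟨h1, -⟩ := h1
          rw [Set.mem_singleton_iff] at h1
          subst h1
          exact absurd he hmem
      exact hG.IsAcyclic (C.transfer G hCe) (hC.transfer hCe)
  exact ⟨hconn, hacyc⟩

end TreeAux

section Aux
variable {V : Type} [DecidableEq V]

lemma toSimpleGraph_adj {T : Finset (V × V)} {a b : V} :
    (toSimpleGraph T).Adj a b ↔ a ≠ b ∧ ((a, b) ∈ T ∨ (b, a) ∈ T) := Iff.rfl

lemma mem_rnni {A : Finset (V × V)} {u v w z a b : V} :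
    (a, b) ∈ rnniSwap A u v w z ↔
      ((a, b) ∈ A ∧ ¬(a = u ∧ b = v) ∧ ¬(a = v ∧ b = w) ∧ ¬(a = w ∧ b = z)) ∨
        ((a = u ∧ b = w) ∨ (a = w ∧ b = v) ∨ (a = v ∧ b = z)) := by
  simp only [rnniSwap, Finset.mem_union, Finset.mem_sdiff, Finset.mem_insert,
    Finset.mem_singleton, Prod.mk.injEq, not_or]

lemma acyclic_no_two {A : Finset (V × V)} (h : Acyclic A) {a b : V}
    (hab : (a, b) ∈ A) : (b, a) ∉ A :=
  fun hba => h a (Relation.TransGen.head hab (Relation.TransGen.single hba))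

lemma card_filter_congr {B C : Finset (V × V)} {p : V × V → Prop} [DecidablePred p]
    (h : ∀ e, p e → (e ∈ B ↔ e ∈ C)) : (B.filter p).card = (C.filter p).card := by
  congr 1
  ext e
  simp only [Finset.mem_filter]
  constructor <;> rintro ⟨h1, h2⟩
  · exact ⟨(h e h2).mp h1, h2⟩
  · exact ⟨(h e h2).mpr h1, h2⟩

lemma inDeg_rnni {B : Finset (V × V)} {u v w z x : V}
    (hv : x ≠ v) (hw : x ≠ w) (hz : x ≠ z) :
    inDeg (rnniSwap B u v w z) x = inDeg B x := by
  unfold inDeg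
  apply card_filter_congr
  rintro ⟨a, b⟩ hb
  simp only at hb
  subst hb
  rw [mem_rnni]
  constructor
  · rintro (⟨h, -⟩ | (⟨-, h⟩ | ⟨-, h⟩ | ⟨-, h⟩)) <;> first | exact h | exact absurd h (by assumption)
  · intro h
    exact Or.inl ⟨h, fun hh => hv hh.2, fun hh => hw hh.2, fun hh => hz hh.2⟩

lemma outDeg_rnni {B : Finset (V × V)} {u v w z x : V}
    (hu : x ≠ u) (hv : x ≠ v) (hw : x ≠ w) :
    outDeg (rnniSwap B u v w z) x = outDeg B x := by
  unfold outDeg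
  apply card_filter_congr
  rintro ⟨a, b⟩ ha
  simp only at ha
  subst ha
  rw [mem_rnni]
  constructor
  · rintro (⟨h, -⟩ | (⟨h, -⟩ | ⟨h, -⟩ | ⟨h, -⟩)) <;> first | exact h | exact absurd h (by assumption)
  · intro h
    exact Or.inl ⟨h, fun hh => hu hh.1, fun hh => hv hh.1, fun hh => hw hh.1⟩

lemma inDeg_rnni_z {B : Finset (V × V)} {u v w z : V}
    (hwzB : (w, z) ∈ B) (hvzB : (v, z) ∉ B) (hzv : z ≠ v) (hzw : z ≠ w) :
    inDeg (rnniSwap B u v w z) z = inDeg B z := by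
  unfold inDeg
  have hfe : (rnniSwap B u v w z).filter (fun e => e.2 = z) =
      insert (v, z) ((B.filter (fun e => e.2 = z)).erase (w, z)) := by
    ext ⟨a, b⟩
    simp only [Finset.mem_filter, Finset.mem_insert, Finset.mem_erase, mem_rnni,
      Prod.mk.injEq, ne_eq]
    constructor
    · rintro ⟨(⟨h, h1, h2, h3⟩ | (⟨rfl, rfl⟩ | ⟨rfl, rfl⟩ | hc)), rfl⟩
      · exact Or.inr ⟨fun hh => h3 ⟨hh.1, rfl⟩, h, rfl⟩
      · exact absurd rfl hzw
      · exact absurd rfl hzv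
      · exact Or.inl ⟨hc.1, rfl⟩
    · rintro (⟨rfl, rfl⟩ | ⟨h1, h2, rfl⟩)
      · exact ⟨Or.inr (Or.inr (Or.inr ⟨rfl, rfl⟩)), rfl⟩
      · refine ⟨Or.inl ⟨h2, ?_, ?_, ?_⟩, rfl⟩
        · rintro ⟨ha, hb⟩; exact hzv hb
        · rintro ⟨ha, hb⟩; exact hzw hb
        · rintro ⟨ha, hb⟩; exact h1 ⟨ha, rfl⟩
  rw [hfe]
  have hmemf : (w, z) ∈ B.filter (fun e => e.2 = z) := Finset.mem_filter.mpr ⟨hwzB, rfl⟩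
  rw [Finset.card_insert_of_notMem
      (fun h => hvzB (Finset.mem_filter.mp (Finset.mem_erase.mp h).2).1),
    Finset.card_erase_of_mem hmemf]
  have : 0 < (B.filter (fun e => e.2 = z)).card := Finset.card_pos.mpr ⟨_, hmemf⟩
  omega

lemma outDeg_ne_zero {B : Finset (V × V)} {x y : V} (h : (x, y) ∈ B) :
    outDeg B x ≠ 0 := by
  intro h0
  rw [outDeg, Finset.card_eq_zero] at h0
  have : (x, y) ∈ B.filter (fun e => e.1 = x) := Finset.mem_filter.mpr ⟨h, rfl⟩
  rw [h0] at this
  exact absurd this (Finset.notMem_empty _)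

lemma inDeg_ne_zero {B : Finset (V × V)} {x y : V} (h : (x, y) ∈ B) :
    inDeg B y ≠ 0 := by
  intro h0
  rw [inDeg, Finset.card_eq_zero] at h0
  have : (x, y) ∈ B.filter (fun e => e.2 = y) := Finset.mem_filter.mpr ⟨h, rfl⟩
  rw [h0] at this
  exact absurd this (Finset.notMem_empty _)

set_option maxHeartbeats 1000000 in
lemma heq_lemma {V : Type} [DecidableEq V] (T : Finset (V × V)) (u v w z : V)
    (huv : (u, v) ∈ T) (hvw : (v, w) ∈ T) (hwz : (w, z) ∈ T)
    (huv' : u ≠ v) (huw' : u ≠ w) (huz' : u ≠ z) (hvw' : v ≠ w) (hvz' : v ≠ z) (hwz' : w ≠ z)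
    (hvuT : (v, u) ∉ T) (hwvT : (w, v) ∉ T) (hzwT : (z, w) ∉ T)
    (huwT : (u, w) ∉ T) (hwuT : (w, u) ∉ T) (hvzT : (v, z) ∉ T) (hzvT : (z, v) ∉ T) :
    toSimpleGraph (rnniSwap T u v w z) =
      ((toSimpleGraph T \ SimpleGraph.fromEdgeSet {s(u, v)}) ⊔ SimpleGraph.fromEdgeSet {s(u, w)})
          \ SimpleGraph.fromEdgeSet {s(w, z)} ⊔ SimpleGraph.fromEdgeSet {s(v, z)} := by
  ext x y
  simp only [toSimpleGraph_adj, SimpleGraph.sup_adj, SimpleGraph.sdiff_adj,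
    SimpleGraph.fromEdgeSet_adj, Set.mem_singleton_iff, Sym2.eq_iff, mem_rnni, ne_eq]
  constructor
  · rintro ⟨hxy, hm | hm⟩
    · rcases hm with ⟨hmT, h1, h2, h3⟩ | (⟨rfl, rfl⟩ | ⟨rfl, rfl⟩ | ⟨rfl, rfl⟩)
      · -- (x,y) ∈ T, not one of the removed arcs
        refine Or.inl ⟨Or.inl ⟨⟨hxy, Or.inl hmT⟩, ?_⟩, ?_⟩
        · rintro (⟨h9, h8⟩ | ⟨h9, h8⟩) <;> simp_all
        · rintro (⟨h9, h8⟩ | ⟨h9, h8⟩) <;> simp_all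
      · -- (x,y) = (u,w)
        refine Or.inl ⟨Or.inr ⟨Or.inl ⟨rfl, rfl⟩, huw'⟩, ?_⟩
        rintro (⟨h9, h8⟩ | ⟨h9, h8⟩) <;> simp_all
      · -- (x,y) = (w,v)
        refine Or.inl ⟨Or.inl ⟨⟨fun h => hvw' h.symm, Or.inr hvw⟩, ?_⟩, ?_⟩
        · rintro (⟨h9, h8⟩ | ⟨h9, h8⟩) <;> simp_all
        · rintro (⟨h9, h8⟩ | ⟨h9, h8⟩) <;> simp_all
      · -- (x,y) = (v,z)
        exact Or.inr ⟨Or.inl ⟨rfl, rfl⟩, hvz'⟩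
    · rcases hm with ⟨hmT, h1, h2, h3⟩ | (⟨rfl, rfl⟩ | ⟨rfl, rfl⟩ | ⟨rfl, rfl⟩)
      · -- (y,x) ∈ T, not one of the removed arcs
        refine Or.inl ⟨Or.inl ⟨⟨hxy, Or.inr hmT⟩, ?_⟩, ?_⟩
        · rintro (⟨h9, h8⟩ | ⟨h9, h8⟩) <;> simp_all
        · rintro (⟨h9, h8⟩ | ⟨h9, h8⟩) <;> simp_all
      · -- (y,x) = (u,w), i.e. x = w, y = u
        refine Or.inl ⟨Or.inr ⟨Or.inr ⟨rfl, rfl⟩, hxy⟩, ?_⟩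
        rintro (⟨h9, h8⟩ | ⟨h9, h8⟩) <;> simp_all
      · -- (y,x) = (w,v), i.e. x = v, y = w
        refine Or.inl ⟨Or.inl ⟨⟨hvw', Or.inl hvw⟩, ?_⟩, ?_⟩
        · rintro (⟨h9, h8⟩ | ⟨h9, h8⟩) <;> simp_all
        · rintro (⟨h9, h8⟩ | ⟨h9, h8⟩) <;> simp_all
      · -- (y,x) = (v,z), i.e. x = z, y = v
        exact Or.inr ⟨Or.inr ⟨rfl, rfl⟩, hxy⟩
  · rintro (⟨⟨⟨hxy, hmem⟩, hnuv⟩ | ⟨hc, hxy⟩, hnwz⟩ | ⟨hc, hxy⟩)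
    · refine ⟨hxy, ?_⟩
      rcases hmem with hmT | hmT
      · by_cases h1 : x = v ∧ y = w
        · exact Or.inr (Or.inr (Or.inr (Or.inl ⟨h1.2, h1.1⟩)))
        · exact Or.inl (Or.inl ⟨hmT, fun hh => hnuv ⟨Or.inl hh, hxy⟩, h1, fun hh => hnwz ⟨Or.inl hh, hxy⟩⟩)
      · by_cases h1 : y = v ∧ x = w
        · exact Or.inl (Or.inr (Or.inr (Or.inl ⟨h1.2, h1.1⟩)))
        · refine Or.inr (Or.inl ⟨hmT, fun hh => hnuv ⟨Or.inr ⟨hh.2, hh.1⟩, hxy⟩, ?_, fun hh => hnwz ⟨Or.inr ⟨hh.2, hh.1⟩, hxy⟩⟩)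
          rintro ⟨hh1, hh2⟩
          exact h1 ⟨hh1, hh2⟩
    · refine ⟨hxy, ?_⟩
      rcases hc with ⟨rfl, rfl⟩ | ⟨rfl, rfl⟩
      · exact Or.inl (Or.inr (Or.inl ⟨rfl, rfl⟩))
      · exact Or.inr (Or.inr (Or.inl ⟨rfl, rfl⟩))
    · refine ⟨hxy, ?_⟩
      rcases hc with ⟨rfl, rfl⟩ | ⟨rfl, rfl⟩
      · exact Or.inl (Or.inr (Or.inr (Or.inr ⟨rfl, rfl⟩)))
      · exact Or.inr (Or.inr (Or.inr (Or.inr ⟨rfl, rfl⟩)))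

end Aux


/-- If `T` is a support tree of a tree-based network `N` containing a directed path
`u → v → w → z`, and the rNNI move replacing `(u,v),(v,w),(w,z)` by `(u,w),(w,v),(v,z)`
yields a valid phylogenetic network `N'`, then `T' = T − {(u,v),(v,w),(w,z)} +
{(u,w),(w,v),(v,z)}` is a support tree of `N'`; in particular `N'` is tree-based. -/
theorem stmt4 {V : Type} [Fintype V] [DecidableEq V]
    (A : Finset (V × V)) (root : V) (hN : IsPhyloNetwork A root)
    (T : Finset (V × V)) (hT : IsSupportTree A T)
    (u v w z : V) (hdist : ([u, v, w, z] : List V).Nodup)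
    (huv : (u, v) ∈ T) (hvw : (v, w) ∈ T) (hwz : (w, z) ∈ T)
    (hvalid : IsPhyloNetwork (rnniSwap A u v w z) root) :
    IsSupportTree (rnniSwap A u v w z) (rnniSwap T u v w z) ∧
      ∃ T' : Finset (V × V), IsSupportTree (rnniSwap A u v w z) T' := by
  obtain ⟨hTA, hGtree, hleafTA⟩ := hT
  have hAcy := hN.acyclic
  simp only [List.nodup_cons, List.mem_cons, List.mem_singleton, List.not_mem_nil,
    or_false, not_or, List.nodup_nil, and_true] at hdist
  obtain ⟨⟨huv', huw', huz'⟩, ⟨hvw', hvz'⟩, ⟨hwz', -⟩⟩ := hdist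
  -- non-membership facts
  have hvuT : (v, u) ∉ T := fun h => acyclic_no_two hAcy (hTA huv) (hTA h)
  have hwvT : (w, v) ∉ T := fun h => acyclic_no_two hAcy (hTA hvw) (hTA h)
  have hzwT : (z, w) ∉ T := fun h => acyclic_no_two hAcy (hTA hwz) (hTA h)
  have hGuv : (toSimpleGraph T).Adj u v := ⟨huv', Or.inl huv⟩
  have hGvw : (toSimpleGraph T).Adj v w := ⟨hvw', Or.inl hvw⟩
  have hGwz : (toSimpleGraph T).Adj w z := ⟨hwz', Or.inl hwz⟩
  have hGuwn : ¬ (toSimpleGraph T).Adj u w := fun h => tree_no_triangle hGtree hGuv hGvw h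
  have hGvzn : ¬ (toSimpleGraph T).Adj v z := fun h => tree_no_triangle hGtree hGvw hGwz h
  have huwT : (u, w) ∉ T := fun h => hGuwn ⟨huw', Or.inl h⟩
  have hwuT : (w, u) ∉ T := fun h => hGuwn ⟨huw', Or.inr h⟩
  have hvzT : (v, z) ∉ T := fun h => hGvzn ⟨hvz', Or.inl h⟩
  have hzvT : (z, v) ∉ T := fun h => hGvzn ⟨hvz', Or.inr h⟩
  -- the tree part
  have htree' : (toSimpleGraph (rnniSwap T u v w z)).IsTree := by
    have hG0vw : ((toSimpleGraph T) \ SimpleGraph.fromEdgeSet {s(u,v)}).Adj v w := by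
      rw [SimpleGraph.sdiff_adj, SimpleGraph.fromEdgeSet_adj]
      refine ⟨hGvw, ?_⟩
      rintro ⟨h1, -⟩
      rw [Set.mem_singleton_iff, Sym2.eq_iff] at h1
      rcases h1 with ⟨h, -⟩ | ⟨-, h⟩
      · exact huv' h.symm
      · exact huw' h.symm
    have hG1 := tree_swap hGtree hGuv huw' (SimpleGraph.Reachable.refl u) hG0vw.reachable
    set G1 := ((toSimpleGraph T) \ SimpleGraph.fromEdgeSet {s(u,v)}) ⊔
      SimpleGraph.fromEdgeSet {s(u,w)} with hG1def
    have hG1wz : G1.Adj w z := by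
      rw [hG1def, SimpleGraph.sup_adj, SimpleGraph.sdiff_adj, SimpleGraph.fromEdgeSet_adj]
      refine Or.inl ⟨hGwz, ?_⟩
      rintro ⟨h1, -⟩
      rw [Set.mem_singleton_iff, Sym2.eq_iff] at h1
      rcases h1 with ⟨h, -⟩ | ⟨-, h⟩
      · exact huw' h.symm
      · exact huz' h.symm
    have hG1wv : (G1 \ SimpleGraph.fromEdgeSet {s(w,z)}).Adj w v := by
      rw [SimpleGraph.sdiff_adj, hG1def, SimpleGraph.sup_adj, SimpleGraph.sdiff_adj,
        SimpleGraph.fromEdgeSet_adj, SimpleGraph.fromEdgeSet_adj, SimpleGraph.fromEdgeSet_adj]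
      constructor
      · refine Or.inl ⟨hGvw.symm, ?_⟩
        rintro ⟨h1, -⟩
        rw [Set.mem_singleton_iff, Sym2.eq_iff] at h1
        rcases h1 with ⟨h, -⟩ | ⟨-, h⟩
        · exact huw' h.symm
        · exact huv' h.symm
      · rintro ⟨h1, -⟩
        rw [Set.mem_singleton_iff, Sym2.eq_iff] at h1
        rcases h1 with ⟨-, h⟩ | ⟨h, -⟩
        · exact hvz' h
        · exact hwz' h
    have hH2 := tree_swap hG1 hG1wz hvz' hG1wv.reachable (SimpleGraph.Reachable.refl z)
    have hEq : toSimpleGraph (rnniSwap T u v w z) =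
        (G1 \ SimpleGraph.fromEdgeSet {s(w,z)}) ⊔ SimpleGraph.fromEdgeSet {s(v,z)} := by
      rw [hG1def]
      exact heq_lemma T u v w z huv hvw hwz huv' huw' huz' hvw' hvz' hwz'
        hvuT hwvT hzwT huwT hwuT hvzT hzvT
    rw [hEq]
    exact hH2
  -- subset
  have hsub : rnniSwap T u v w z ⊆ rnniSwap A u v w z := by
    rintro ⟨a, b⟩ h
    rw [mem_rnni] at h ⊢
    rcases h with ⟨h1, h2, h3, h4⟩ | h
    · exact Or.inl ⟨hTA h1, h2, h3, h4⟩
    · exact Or.inr h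
  -- membership of the new arcs
  have hA'uw : (u, w) ∈ rnniSwap A u v w z := mem_rnni.mpr (Or.inr (Or.inl ⟨rfl, rfl⟩))
  have hA'wv : (w, v) ∈ rnniSwap A u v w z := mem_rnni.mpr (Or.inr (Or.inr (Or.inl ⟨rfl, rfl⟩)))
  have hA'vz : (v, z) ∈ rnniSwap A u v w z := mem_rnni.mpr (Or.inr (Or.inr (Or.inr ⟨rfl, rfl⟩)))
  have hT'uw : (u, w) ∈ rnniSwap T u v w z := mem_rnni.mpr (Or.inr (Or.inl ⟨rfl, rfl⟩))
  have hT'wv : (w, v) ∈ rnniSwap T u v w z := mem_rnni.mpr (Or.inr (Or.inr (Or.inl ⟨rfl, rfl⟩)))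
  have hT'vz : (v, z) ∈ rnniSwap T u v w z := mem_rnni.mpr (Or.inr (Or.inr (Or.inr ⟨rfl, rfl⟩)))
  -- leaves
  have hleaf : ∀ x : V, IsLeaf (rnniSwap A u v w z) x ↔ IsLeaf (rnniSwap T u v w z) x := by
    intro x
    by_cases hxu : x = u
    · subst hxu
      exact iff_of_false (fun h => outDeg_ne_zero hA'uw h.2) (fun h => outDeg_ne_zero hT'uw h.2)
    by_cases hxv : x = v
    · subst hxv
      exact iff_of_false (fun h => outDeg_ne_zero hA'vz h.2) (fun h => outDeg_ne_zero hT'vz h.2)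
    by_cases hxw : x = w
    · subst hxw
      exact iff_of_false (fun h => outDeg_ne_zero hA'wv h.2) (fun h => outDeg_ne_zero hT'wv h.2)
    by_cases hxz : x = z
    · subst hxz
      have hTz : IsLeaf (rnniSwap T u v w x) x ↔ IsLeaf T x := by
        unfold IsLeaf
        rw [inDeg_rnni_z hwz hvzT (fun h => hvz' h.symm) (fun h => hwz' h.symm),
          outDeg_rnni hxu hxv hxw]
      by_cases hvzA : (v, x) ∈ A
      · have hzroot : x ≠ root := by
          intro h
          exact inDeg_ne_zero (hTA hwz) (h ▸ hN.root_in)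
        have h2le : 2 ≤ inDeg A x := by
          have hss : ({(w, x), (v, x)} : Finset (V × V)) ⊆ A.filter (fun e => e.2 = x) := by
            intro e he
            rcases Finset.mem_insert.mp he with rfl | he
            · exact Finset.mem_filter.mpr ⟨hTA hwz, rfl⟩
            · rw [Finset.mem_singleton] at he
              subst he
              exact Finset.mem_filter.mpr ⟨hvzA, rfl⟩
          have hcard : ({(w, x), (v, x)} : Finset (V × V)).card = 2 := by
            rw [Finset.card_insert_of_notMem, Finset.card_singleton]
            rw [Finset.mem_singleton]
            intro h
            exact hvw' (congrArg Prod.fst h).symm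
          rw [← hcard]
          exact Finset.card_le_card hss
        have houtz : outDeg A x = 1 := by
          rcases hN.vertex_types x hzroot with ⟨h1, -⟩ | ⟨h1, -⟩ | ⟨-, h1⟩
          · omega
          · omega
          · exact h1
        refine iff_of_false ?_ ?_
        · intro h
          have h2 := h.2
          rw [outDeg_rnni hxu hxv hxw, houtz] at h2
          exact one_ne_zero h2
        · intro h
          rw [hTz] at h
          exact one_ne_zero (houtz ▸ ((hleafTA x).mpr h).2)
      · unfold IsLeaf
        rw [inDeg_rnni_z (hTA hwz) hvzA (fun h => hvz' h.symm) (fun h => hwz' h.symm),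
          inDeg_rnni_z hwz hvzT (fun h => hvz' h.symm) (fun h => hwz' h.symm),
          outDeg_rnni hxu hxv hxw, outDeg_rnni hxu hxv hxw]
        exact hleafTA x
    · unfold IsLeaf
      rw [inDeg_rnni hxv hxw hxz, outDeg_rnni hxu hxv hxw,
        inDeg_rnni hxv hxw hxz, outDeg_rnni hxu hxv hxw]
      exact hleafTA x
  refine ⟨⟨hsub, htree', hleaf⟩, ⟨rnniSwap T u v w z, hsub, htree', hleaf⟩⟩
end

section
/- A burl-rooted tree with k reticulation vertices is a tree-based network: the subgraph obtained by deleting the k reticulation arcs (a_i, b_i) is a spanning tree whose leaves are exactly the leaves of the network. -/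
-- auxiliary tree lemma
lemma my_tree_of_parent {V : Type} [Fintype V] [DecidableEq V]
    (T : Finset (V × V)) (ρ : V)
    (hacy : ∀ v : V, ¬ Relation.TransGen (Adj T) v v)
    (hρ : inDeg T ρ = 0)
    (h1 : ∀ v : V, v ≠ ρ → inDeg T v = 1) :
    (toSimpleGraph T).IsTree := by
  classical
  -- unique parents
  have hpar : ∀ v : V, v ≠ ρ → ∃ p : V, (p, v) ∈ T ∧ ∀ x, (x, v) ∈ T → x = p := by
    intro v hv
    obtain ⟨e, he⟩ := Finset.card_eq_one.mp (h1 v hv)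
    have h2 : ∀ f, f ∈ T.filter (fun e => e.2 = v) ↔ f = e := by rw [he]; simp
    have he1 : (e.1, v) ∈ T := by
      have h3 := (h2 e).mpr rfl
      rw [Finset.mem_filter] at h3
      rw [← h3.2]
      exact h3.1
    refine ⟨e.1, he1, fun x hx => ?_⟩
    have h4 := (h2 (x, v)).mp (Finset.mem_filter.mpr ⟨hx, rfl⟩)
    exact congrArg Prod.fst h4
  have hmemne : ∀ {x v : V}, (x, v) ∈ T → v ≠ ρ := by
    intro x v hxv hvρ
    have : (x, v) ∈ T.filter (fun e => e.2 = v) := Finset.mem_filter.mpr ⟨hxv, rfl⟩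
    have hc : 0 < inDeg T v := Finset.card_pos.mpr ⟨_, this⟩
    rw [hvρ, hρ] at hc; exact Nat.lt_irrefl 0 hc
  have hwf : WellFounded (Adj T) := by
    have ht : IsTrans V (Relation.TransGen (Adj T)) := ⟨fun _ _ _ h h' => h.trans h'⟩
    have hi : IsIrrefl V (Relation.TransGen (Adj T)) := ⟨hacy⟩
    exact Subrelation.wf (fun h => Relation.TransGen.single h)
      (Finite.wellFounded_of_trans_of_irrefl _)
  -- connectivity
  have hreach : ∀ v : V, (toSimpleGraph T).Reachable v ρ := by
    intro v
    induction v using WellFounded.induction hwf with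
    | _ v ih =>
      by_cases hv : v = ρ
      · subst hv; exact SimpleGraph.Reachable.refl _
      · obtain ⟨p, hp, _⟩ := hpar v hv
        have hne : p ≠ v := by
          intro h; subst h; exact hacy p (Relation.TransGen.single hp)
        have hadj : (toSimpleGraph T).Adj v p := ⟨hne.symm, Or.inr hp⟩
        exact hadj.reachable.trans (ih p hp)
  have hconn : (toSimpleGraph T).Connected := by
    have : Nonempty V := ⟨ρ⟩
    exact SimpleGraph.Connected.mk (fun x y => (hreach x).trans (hreach y).symm)
  -- acyclicity : every arc edge is a bridge
  have hbridge : ∀ p v : V, (p, v) ∈ T → (toSimpleGraph T).IsBridge s(p, v) := by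
    intro p v hpv
    have hvρ : v ≠ ρ := hmemne hpv
    obtain ⟨q, hq, huniq⟩ := hpar v hvρ
    have hqp : p = q := huniq p hpv
    subst hqp
    have hne : p ≠ v := by
      intro h; subst h; exact hacy p (Relation.TransGen.single hpv)
    refine SimpleGraph.isBridge_iff.mpr ?_
    intro hr
    obtain ⟨w⟩ := hr
    -- descendant set of v
    set S : Set V := {x | Relation.ReflTransGen (Adj T) v x} with hS
    have hvS : v ∈ S := Relation.ReflTransGen.refl
    have hpS : p ∉ S := by
      intro h
      exact hacy v (Relation.TransGen.tail' h hpv)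
    obtain ⟨d, _, hd1, hd2⟩ := (w.reverse).exists_boundary_dart S hvS hpS
    have hda := d.adj
    simp only [SimpleGraph.deleteEdges, SimpleGraph.sdiff_adj, SimpleGraph.fromEdgeSet_adj] at hda
    obtain ⟨⟨hdne, hcase⟩, hnotdel⟩ := hda
    rcases hcase with hfw | hbw
    · -- arc d.fst → d.snd, so d.snd ∈ S, contradiction
      exact hd2 (Relation.ReflTransGen.tail hd1 hfw)
    · -- arc d.snd → d.fst : d.snd is the parent of d.fst
      have hfρ : d.fst ≠ ρ := hmemne hbw
      by_cases hfv : d.fst = v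
      · -- then d.snd = p, so the dart edge is the deleted edge
        rw [hfv] at hbw
        have : d.snd = p := huniq _ hbw
        apply hnotdel
        constructor
        · rw [hfv, this]; exact Sym2.eq_swap
        · exact hdne
      · -- v ⟶* d.fst nontrivially; last step comes from the unique parent d.snd
        rcases Relation.ReflTransGen.cases_tail hd1 with h | ⟨c, hc1, hc2⟩
        · exact hfv h
        · obtain ⟨pf, hpf, huniq'⟩ := hpar d.fst hfρ
          have h5 : c = pf := huniq' c hc2
          have h6 : d.snd = pf := huniq' d.snd hbw
          exact hd2 (h6 ▸ h5 ▸ hc1)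
  have hacyG : (toSimpleGraph T).IsAcyclic := by
    rw [SimpleGraph.isAcyclic_iff_forall_adj_isBridge]
    intro x y hxy
    rcases hxy.2 with h | h
    · exact hbridge x y h
    · rw [Sym2.eq_swap]; exact hbridge y x h
  exact ⟨hconn, hacyG⟩

lemma my_filter_sdiff {V : Type} [DecidableEq V] (A R : Finset (V × V))
    (p : V × V → Prop) [DecidablePred p] :
    (A \ R).filter p = A.filter p \ R.filter p := by
  ext e; simp only [Finset.mem_filter, Finset.mem_sdiff]; tauto

/-- A burl-rooted tree with `k` reticulation vertices `b 0, …, b (k-1)` and corresponding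
tree vertices `a 0, …, a (k-1)` is tree-based: deleting the `k` reticulation arcs
`(a i, b i)` yields a spanning tree whose leaves are exactly the leaves of the network. -/
theorem stmt7 {V : Type} [Fintype V] [DecidableEq V]
    (A : Finset (V × V)) (ρ : V) (hN : IsPhyloNetwork A ρ)
    (k : ℕ) (hk : 0 < k) (a b : Fin k → V) (ℓ₁ u : V)
    (hainj : Function.Injective a) (hbinj : Function.Injective b)
    (hret : ∀ i : Fin k, inDeg A (b i) = 2 ∧ outDeg A (b i) = 1)
    (htreev : ∀ i : Fin k, inDeg A (a i) = 1 ∧ outDeg A (a i) = 2)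
    (hretAll : ∀ v : V, inDeg A v = 2 ∧ outDeg A v = 1 → ∃ i : Fin k, v = b i)
    (hleaf : IsLeaf A ℓ₁)
    -- the path ρ → b 0 → ⋯ → b (k-1) → ℓ₁
    (hρb : (ρ, b ⟨0, hk⟩) ∈ A)
    (hbchain : ∀ i : Fin k, ∀ h : i.1 + 1 < k, (b i, b ⟨i.1 + 1, h⟩) ∈ A)
    (hbl : (b ⟨k - 1, Nat.sub_lt hk Nat.one_pos⟩, ℓ₁) ∈ A)
    -- every directed path from ρ to another leaf begins ρ → a 0 → ⋯ → a (k-1) → u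
    (hprefix : ∀ ℓ : V, IsLeaf A ℓ → ℓ ≠ ℓ₁ →
      ∀ (p : List V) (hp : p ≠ []), List.Chain (Adj A) ρ p → p.getLast hp = ℓ →
        (List.ofFn a ++ [u]) <+: p)
    -- the reticulation arcs (a i, b i)
    (hab : ∀ i : Fin k, (a i, b i) ∈ A) :
    IsSupportTree A (A \ Finset.image (fun i : Fin k => (a i, b i)) Finset.univ) ∧
      ∃ T : Finset (V × V), IsSupportTree A T := by
  classical
  set R : Finset (V × V) := Finset.image (fun i : Fin k => (a i, b i)) Finset.univ with hRdef
  set T : Finset (V × V) := A \ R with hTdef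
  have hRA : R ⊆ A := by
    intro e he
    rw [hRdef, Finset.mem_image] at he
    obtain ⟨i, _, rfl⟩ := he
    exact hab i
  have hTA : T ⊆ A := Finset.sdiff_subset
  have hanb : ∀ i j : Fin k, a i ≠ b j := by
    intro i j h
    have h1 := (htreev i).1
    rw [h, (hret j).1] at h1
    omega
  -- filter computations on R
  have hRhead : ∀ i : Fin k, R.filter (fun e => e.2 = b i) = {(a i, b i)} := by
    intro i; ext e
    simp only [hRdef, Finset.mem_filter, Finset.mem_image, Finset.mem_univ, true_and,
      Finset.mem_singleton]
    constructor
    · rintro ⟨⟨j, rfl⟩, h2⟩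
      simp only at h2
      rw [hbinj h2]
    · rintro rfl; exact ⟨⟨i, rfl⟩, rfl⟩
  have hheadempty : ∀ v : V, (∀ i, v ≠ b i) → R.filter (fun e => e.2 = v) = ∅ := by
    intro v hv
    ext e
    simp only [hRdef, Finset.mem_filter, Finset.mem_image, Finset.mem_univ, true_and,
      Finset.notMem_empty, iff_false, not_and]
    rintro ⟨j, rfl⟩ h2
    exact hv j h2.symm
  have hRtail : ∀ i : Fin k, R.filter (fun e => e.1 = a i) = {(a i, b i)} := by
    intro i; ext e
    simp only [hRdef, Finset.mem_filter, Finset.mem_image, Finset.mem_univ, true_and,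
      Finset.mem_singleton]
    constructor
    · rintro ⟨⟨j, rfl⟩, h2⟩
      simp only at h2
      rw [hainj h2]
    · rintro rfl; exact ⟨⟨i, rfl⟩, rfl⟩
  have htailempty : ∀ v : V, (∀ i, v ≠ a i) → R.filter (fun e => e.1 = v) = ∅ := by
    intro v hv
    ext e
    simp only [hRdef, Finset.mem_filter, Finset.mem_image, Finset.mem_univ, true_and,
      Finset.notMem_empty, iff_false, not_and]
    rintro ⟨j, rfl⟩ h2
    exact hv j h2.symm
  -- degree formulas
  have hinT : ∀ v : V, inDeg T v = inDeg A v - (R.filter (fun e => e.2 = v)).card := by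
    intro v
    show ((A \ R).filter _).card = _
    rw [my_filter_sdiff, Finset.card_sdiff_of_subset (Finset.filter_subset_filter _ hRA)]; rfl
  have houtT : ∀ v : V, outDeg T v = outDeg A v - (R.filter (fun e => e.1 = v)).card := by
    intro v
    show ((A \ R).filter _).card = _
    rw [my_filter_sdiff, Finset.card_sdiff_of_subset (Finset.filter_subset_filter _ hRA)]; rfl
  -- in-degrees in T
  have hρT : inDeg T ρ = 0 := by
    have h1 : inDeg T ρ ≤ inDeg A ρ :=
      Finset.card_le_card (Finset.filter_subset_filter _ hTA)
    rw [hN.root_in] at h1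
    omega
  have h1T : ∀ v : V, v ≠ ρ → inDeg T v = 1 := by
    intro v hv
    by_cases hb : ∃ i, v = b i
    · obtain ⟨i, rfl⟩ := hb
      rw [hinT, hRhead i, Finset.card_singleton, (hret i).1]
    · push_neg at hb
      rw [hinT, hheadempty v hb, Finset.card_empty]
      rcases hN.vertex_types v hv with ⟨h, _⟩ | ⟨h, _⟩ | ⟨h1, h2⟩
      · rw [h]
      · rw [h]
      · obtain ⟨i, hi⟩ := hretAll v ⟨h1, h2⟩
        exact absurd hi (hb i)
  have hacyT : ∀ v : V, ¬ Relation.TransGen (Adj T) v v := by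
    intro v h
    exact hN.acyclic v (Relation.TransGen.mono (r := Adj T) (p := Adj A) (fun x y hxy => hTA hxy) v v h)
  have htree : (toSimpleGraph T).IsTree := my_tree_of_parent T ρ hacyT hρT h1T
  -- leaves coincide
  have hleafiff : ∀ v : V, IsLeaf A v ↔ IsLeaf T v := by
    intro v
    constructor
    · rintro ⟨h1, h2⟩
      have hb : ∀ i, v ≠ b i := by
        intro i h
        rw [h, (hret i).1] at h1; omega
      have ha : ∀ i, v ≠ a i := by
        intro i h
        rw [h, (htreev i).2] at h2; omega
      refine ⟨?_, ?_⟩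
      · rw [hinT, hheadempty v hb, Finset.card_empty, h1]
      · rw [houtT, htailempty v ha, Finset.card_empty, h2]
    · rintro ⟨h1, h2⟩
      have ha : ∀ i, v ≠ a i := by
        intro i h
        rw [h, houtT, hRtail i, Finset.card_singleton, (htreev i).2] at h2
        omega
      have hb : ∀ i, v ≠ b i := by
        intro i h
        have hba : ∀ j, b i ≠ a j := fun j hj => hanb j i hj.symm
        rw [h, houtT, htailempty (b i) hba, Finset.card_empty, (hret i).2] at h2
        omega
      rw [hinT, hheadempty v hb, Finset.card_empty] at h1
      rw [houtT, htailempty v ha, Finset.card_empty] at h2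
      exact ⟨by omega, by omega⟩
  have hsupp : IsSupportTree A T := ⟨hTA, htree, hleafiff⟩
  exact ⟨hsupp, ⟨T, hsupp⟩⟩
end
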